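/- For every prime p, positive integer j, and positive integer δ, the formal power series congruence ∏_{n≥1} (1 - q^{δn})^{p^j} ≡ ∏_{n≥1} (1 - q^{pδn})^{p^{j-1}} (mod p^j) holds in ℤ[[q]]. -/

import Mathlib

open Finset

/-- The infinite product `∏_{n ≥ 1} (1 - q^{δ n})` in `ℤ[[q]]`: since the factor at
index `n` is `1 + O(q^n)` (for `δ ≥ 1`), the coefficient of `q^m` of the infinite product
equals that of the finite partial product over `1 ≤ n ≤ m`. -/
noncomputable def prodQ (δ : ℕ) : PowerSeries ℤ :=
  PowerSeries.mk fun m =>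
    PowerSeries.coeff (R := ℤ) m (∏ n ∈ Finset.Icc 1 m, (1 - PowerSeries.X ^ (δ * n)))

lemma charP_ps (R : Type*) [CommRing R] (p : ℕ) [CharP R p] : CharP (PowerSeries R) p := by
  constructor
  intro n
  rw [← map_natCast (PowerSeries.C (R := R)) n]
  constructor
  · intro h
    have := congrArg (PowerSeries.constantCoeff (R := R)) h
    exact (CharP.cast_eq_zero_iff R p n).mp (by simpa using this)
  · intro h
    rw [(CharP.cast_eq_zero_iff R p n).mpr h, map_zero]

lemma coeff_C_mul' (c : ℤ) (g : PowerSeries ℤ) (m : ℕ) :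
    PowerSeries.coeff (R := ℤ) m (PowerSeries.C (R := ℤ) c * g) = c * PowerSeries.coeff (R := ℤ) m g := by
  rw [← PowerSeries.smul_eq_C_mul, map_smul, smul_eq_mul]

lemma constDvd (c : ℤ) (f : PowerSeries ℤ) :
    (PowerSeries.C (R := ℤ) c) ∣ f ↔ ∀ m, c ∣ PowerSeries.coeff (R := ℤ) m f := by
  constructor
  · rintro ⟨g, rfl⟩ m
    exact ⟨_, coeff_C_mul' c g m⟩
  · intro h
    refine ⟨PowerSeries.mk fun m => (h m).choose, ?_⟩
    ext m
    rw [coeff_C_mul', PowerSeries.coeff_mk, ← (h m).choose_spec]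

/-- product of `1 - f n` with all `f n` divisible by `X^(k+1)` is `1` mod `X^(k+1)` -/
lemma prod_sub_one_dvd (k : ℕ) (s : Finset ℕ) (f : ℕ → PowerSeries ℤ)
    (hf : ∀ n ∈ s, (PowerSeries.X : PowerSeries ℤ) ^ (k + 1) ∣ f n) :
    (PowerSeries.X : PowerSeries ℤ) ^ (k + 1) ∣ (∏ n ∈ s, (1 - f n)) - 1 := by
  classical
  induction s using Finset.induction with
  | empty => simp
  | @insert a s ha ih =>
    rw [Finset.prod_insert ha]
    have h1 := ih (fun n hn => hf n (Finset.mem_insert_of_mem hn))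
    have h2 := hf a (Finset.mem_insert_self a s)
    have : (1 - f a) * ∏ n ∈ s, (1 - f n) - 1
        = (1 - f a) * ((∏ n ∈ s, (1 - f n)) - 1) - f a := by ring
    rw [this]
    exact dvd_sub (Dvd.dvd.mul_left h1 _) h2

/-- Truncation: for `k ≤ N` the coefficient of `q^k` of the partial product up to `N`
equals that of the partial product up to `k`. -/
lemma coeff_trunc (δ k N : ℕ) (hδ : 1 ≤ δ) (hk : k ≤ N) :
    PowerSeries.coeff (R := ℤ) k (∏ n ∈ Finset.Icc 1 N, (1 - PowerSeries.X ^ (δ * n)))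
      = PowerSeries.coeff (R := ℤ) k (∏ n ∈ Finset.Icc 1 k, (1 - PowerSeries.X ^ (δ * n))) := by
  have hIcc : ∀ M : ℕ, Finset.Icc 1 M = Finset.Ioc 0 M := fun M => by
    rw [← Finset.Icc_add_one_left_eq_Ioc]; rfl
  have hsplit : (∏ n ∈ Finset.Ioc 0 k, (1 - PowerSeries.X ^ (δ * n) : PowerSeries ℤ))
      * ∏ n ∈ Finset.Ioc k N, (1 - PowerSeries.X ^ (δ * n) : PowerSeries ℤ)
      = ∏ n ∈ Finset.Ioc 0 N, (1 - PowerSeries.X ^ (δ * n) : PowerSeries ℤ) :=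
    Finset.prod_Ioc_consecutive _ (Nat.zero_le k) hk
  rw [hIcc, hIcc, ← hsplit]
  have hdvd : (PowerSeries.X : PowerSeries ℤ) ^ (k + 1) ∣
      (∏ n ∈ Finset.Ioc k N, (1 - PowerSeries.X ^ (δ * n) : PowerSeries ℤ)) - 1 := by
    apply prod_sub_one_dvd
    intro n hn
    have hn' : k + 1 ≤ n := (Finset.mem_Ioc.mp hn).1
    exact pow_dvd_pow _ (le_trans hn' (le_trans (Nat.le_mul_of_pos_left n hδ) (le_refl _)))
  set P1 := ∏ n ∈ Finset.Ioc 0 k, (1 - PowerSeries.X ^ (δ * n) : PowerSeries ℤ)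
  set P2 := ∏ n ∈ Finset.Ioc k N, (1 - PowerSeries.X ^ (δ * n) : PowerSeries ℤ)
  have : P1 * P2 = P1 + P1 * (P2 - 1) := by ring
  rw [this, map_add]
  have hz : PowerSeries.coeff (R := ℤ) k (P1 * (P2 - 1)) = 0 := by
    have : (PowerSeries.X : PowerSeries ℤ) ^ (k + 1) ∣ P1 * (P2 - 1) :=
      Dvd.dvd.mul_left hdvd _
    exact (PowerSeries.X_pow_dvd_iff.mp this) k (Nat.lt_succ_self k)
  rw [hz, add_zero]

/-- `prodQ δ` agrees with the partial product up to `m` modulo `X^(m+1)`. -/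
lemma prodQ_trunc (δ m : ℕ) (hδ : 1 ≤ δ) :
    (PowerSeries.X : PowerSeries ℤ) ^ (m + 1) ∣
      prodQ δ - ∏ n ∈ Finset.Icc 1 m, (1 - PowerSeries.X ^ (δ * n)) := by
  rw [PowerSeries.X_pow_dvd_iff]
  intro k hk
  rw [map_sub, prodQ, PowerSeries.coeff_mk,
    coeff_trunc δ k m hδ (Nat.lt_succ_iff.mp hk), sub_self]

/-- In `ℤ[[q]]`, `(∏ (1 - X^{δn}))^p ≡ ∏ (1 - X^{pδn}) (mod p)`. -/
lemma frob_step (p : ℕ) (hp : p.Prime) (δ : ℕ) (s : Finset ℕ) :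
    (PowerSeries.C (R := ℤ) (p : ℤ)) ∣
      (∏ n ∈ s, (1 - PowerSeries.X ^ (δ * n) : PowerSeries ℤ)) ^ p
        - ∏ n ∈ s, (1 - PowerSeries.X ^ (p * δ * n) : PowerSeries ℤ) := by
  rw [constDvd]
  intro m
  rw [← ZMod.intCast_zmod_eq_zero_iff_dvd]
  have := charP_ps (ZMod p) p
  have hfact : Fact p.Prime := ⟨hp⟩
  let φ := PowerSeries.map (Int.castRingHom (ZMod p))
  have key : φ ((∏ n ∈ s, (1 - PowerSeries.X ^ (δ * n) : PowerSeries ℤ)) ^ p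
      - ∏ n ∈ s, (1 - PowerSeries.X ^ (p * δ * n) : PowerSeries ℤ)) = 0 := by
    rw [map_sub, map_pow, map_prod, map_prod]
    have h1 : ∀ n : ℕ, φ (1 - PowerSeries.X ^ (δ * n) : PowerSeries ℤ)
        = (1 - PowerSeries.X ^ (δ * n) : PowerSeries (ZMod p)) := by
      intro n; rw [map_sub, map_one, map_pow, PowerSeries.map_X]
    have h2 : ∀ n : ℕ, φ (1 - PowerSeries.X ^ (p * δ * n) : PowerSeries ℤ)
        = (1 - PowerSeries.X ^ (p * δ * n) : PowerSeries (ZMod p)) := by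
      intro n; rw [map_sub, map_one, map_pow, PowerSeries.map_X]
    simp only [h1, h2]
    rw [← Finset.prod_pow]
    rw [sub_eq_zero_of_eq]
    apply Finset.prod_congr rfl
    intro n _
    rw [sub_pow_char, one_pow, ← pow_mul, show δ * n * p = p * δ * n by ring]
  have := congrArg (PowerSeries.coeff (R := ZMod p) m) key
  rw [PowerSeries.coeff_map, map_zero] at this
  simpa using this

theorem stmt3 (p : ℕ) (hp : p.Prime) (j : ℕ) (hj : 1 ≤ j) (δ : ℕ) (hδ : 1 ≤ δ) (m : ℕ) :
    ((p : ℤ) ^ j) ∣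
      PowerSeries.coeff (R := ℤ) m (prodQ δ ^ (p ^ j) - prodQ (p * δ) ^ (p ^ (j - 1))) := by
  set A := ∏ n ∈ Finset.Icc 1 m, (1 - PowerSeries.X ^ (δ * n) : PowerSeries ℤ) with hA
  set B := ∏ n ∈ Finset.Icc 1 m, (1 - PowerSeries.X ^ (p * δ * n) : PowerSeries ℤ) with hB
  -- Step 1: replace coefficient of infinite products by finite products
  have hδ' : 1 ≤ p * δ := Nat.one_le_iff_ne_zero.mpr
    (Nat.mul_ne_zero hp.pos.ne' (Nat.one_le_iff_ne_zero.mp hδ))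
  have h1 : (PowerSeries.X : PowerSeries ℤ) ^ (m + 1) ∣
      (prodQ δ ^ (p ^ j) - prodQ (p * δ) ^ (p ^ (j - 1))) - (A ^ (p ^ j) - B ^ (p ^ (j - 1))) := by
    have e1 : (prodQ δ ^ (p ^ j) - prodQ (p * δ) ^ (p ^ (j - 1))) - (A ^ (p ^ j) - B ^ (p ^ (j - 1)))
        = (prodQ δ ^ (p ^ j) - A ^ (p ^ j)) - (prodQ (p * δ) ^ (p ^ (j - 1)) - B ^ (p ^ (j - 1))) := by
      ring
    rw [e1]
    apply dvd_sub
    · exact dvd_trans (prodQ_trunc δ m hδ) (sub_dvd_pow_sub_pow _ _ _)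
    · exact dvd_trans (prodQ_trunc (p * δ) m hδ') (sub_dvd_pow_sub_pow _ _ _)
  have hc : PowerSeries.coeff (R := ℤ) m (prodQ δ ^ (p ^ j) - prodQ (p * δ) ^ (p ^ (j - 1)))
      = PowerSeries.coeff (R := ℤ) m (A ^ (p ^ j) - B ^ (p ^ (j - 1))) := by
    have := (PowerSeries.X_pow_dvd_iff.mp h1) m (Nat.lt_succ_self m)
    rw [map_sub, sub_eq_zero] at this
    exact this
  rw [hc]
  -- Step 2: finite product congruence
  have key : (PowerSeries.C (R := ℤ) ((p : ℤ) ^ j)) ∣ A ^ (p ^ j) - B ^ (p ^ (j - 1)) := by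
    have hAB : ((p : ℕ) : PowerSeries ℤ) ∣ A ^ p - B := by
      have : ((p : ℕ) : PowerSeries ℤ) = PowerSeries.C (R := ℤ) (p : ℤ) := by
        rw [← map_natCast (PowerSeries.C (R := ℤ)) p]
      rw [this]
      exact frob_step p hp δ _
    have := dvd_sub_pow_of_dvd_sub hAB (j - 1)
    have hpj : p * p ^ (j - 1) = p ^ j := by
      conv_rhs => rw [← Nat.sub_add_cancel hj, pow_succ]
      ring
    have hpow : (A ^ p) ^ p ^ (j - 1) = A ^ p ^ j := by
      rw [← pow_mul, hpj]
    rw [hpow] at this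
    have hj' : j - 1 + 1 = j := by omega
    rw [hj'] at this
    have hcast : ((p : ℕ) : PowerSeries ℤ) ^ j = PowerSeries.C (R := ℤ) ((p : ℤ) ^ j) := by
      rw [map_pow, ← map_natCast (PowerSeries.C (R := ℤ)) p]
    rw [← hcast]
    exact this
  exact (constDvd _ _).mp key m
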